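/- For 0 < h < t < 1, with a = t/h and b = (1-t)/h, the h-Bernstein polynomial satisfies the beta-binomial mixture representation B_k^n(t;h) = ∫_0^1 C(n,k) p^k (1-p)^{n-k} · p^{a-1}(1-p)^{b-1} / B(a,b) dp, where B(a,b) is the Beta function. -/

import Mathlib

/-- The h-Bernstein polynomial (Pólya–Eggenberger probability mass function). -/
noncomputable def hBernstein (n k : ℕ) (t h : ℝ) : ℝ :=
  (n.choose k : ℝ) *
    ((∏ i ∈ Finset.range k, (t + i * h)) * ∏ i ∈ Finset.range (n - k), (1 - t + i * h)) /
    ∏ i ∈ Finset.range n, (1 + i * h)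


open Finset intervalIntegral

lemma realBeta_eq_Gamma (a b : ℝ) (ha : 0 < a) (hb : 0 < b) :
    (∫ x in (0:ℝ)..1, x ^ (a - 1) * (1 - x) ^ (b - 1)) =
      Real.Gamma a * Real.Gamma b / Real.Gamma (a + b) := by
  have hcast : Complex.betaIntegral a b =
      ((∫ x in (0:ℝ)..1, x ^ (a - 1) * (1 - x) ^ (b - 1) : ℝ) : ℂ) := by
    rw [Complex.betaIntegral, ← intervalIntegral.integral_ofReal]
    apply intervalIntegral.integral_congr
    intro x hx
    rw [Set.uIcc_of_le (by norm_num : (0:ℝ) ≤ 1)] at hx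
    obtain ⟨h0, h1⟩ := hx
    show (x:ℂ) ^ ((a:ℂ) - 1) * (1 - (x:ℂ)) ^ ((b:ℂ) - 1) = ((x ^ (a - 1) * (1 - x) ^ (b - 1) : ℝ) : ℂ)
    rw [Complex.ofReal_mul, Complex.ofReal_cpow h0, Complex.ofReal_cpow (by linarith : (0:ℝ) ≤ 1 - x)]
    push_cast
    ring
  have := Complex.Gamma_mul_Gamma_eq_betaIntegral
    (by simpa using ha : 0 < (a:ℂ).re) (by simpa using hb : 0 < (b:ℂ).re)
  rw [hcast, ← Complex.ofReal_add, Complex.Gamma_ofReal, Complex.Gamma_ofReal,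
    Complex.Gamma_ofReal, ← Complex.ofReal_mul, ← Complex.ofReal_mul] at this
  have h3 := Complex.ofReal_injective this
  have hne : Real.Gamma (a + b) ≠ 0 := (Real.Gamma_pos_of_pos (by linarith)).ne'
  field_simp
  linarith [h3]

lemma Gamma_add_nat (x : ℝ) (hx : 0 < x) (n : ℕ) :
    Real.Gamma (x + n) = Real.Gamma x * ∏ i ∈ Finset.range n, (x + i) := by
  induction n with
  | zero => simp
  | succ n ih =>
    have : x + (n + 1 : ℕ) = (x + n) + 1 := by push_cast; ring
    rw [this, Real.Gamma_add_one (by positivity), ih, Finset.prod_range_succ]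
    ring

lemma rpow_mix (x : ℝ) (hx : 0 ≤ x) (c : ℝ) (hc : 0 < c) (k : ℕ) :
    x ^ k * x ^ (c - 1) = x ^ (c + k - 1) := by
  rcases hx.eq_or_lt with h | h
  · subst h
    rcases Nat.eq_zero_or_pos k with hk | hk
    · subst hk; simp
    · have hk1 : (1:ℝ) ≤ (k:ℝ) := by exact_mod_cast hk
      rw [zero_pow hk.ne', zero_mul, Real.zero_rpow (by nlinarith : c + (k:ℝ) - 1 ≠ 0)]
  · rw [← Real.rpow_natCast x k, ← Real.rpow_add h]
    ring_nf

/-- For `0 < h < t < 1`, with `a = t/h` and `b = (1-t)/h`, the h-Bernstein polynomial is a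
beta-binomial mixture:
`B_k^n(t;h) = ∫_0^1 C(n,k) p^k (1-p)^{n-k} · p^{a-1}(1-p)^{b-1} / B(a,b) dp`. -/
theorem hBernstein_beta_binomial (t h : ℝ) (hh : 0 < h) (hht : h < t) (ht : t < 1)
    (n k : ℕ) (a b : ℝ) (ha : a = t / h) (hb : b = (1 - t) / h) :
    hBernstein n k t h =
      ∫ p in (0 : ℝ)..1,
        (n.choose k : ℝ) * p ^ k * (1 - p) ^ (n - k) *
          (p ^ (a - 1) * (1 - p) ^ (b - 1)) /
          (∫ x in (0 : ℝ)..1, x ^ (a - 1) * (1 - x) ^ (b - 1)) := by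
  by_cases hk : k ≤ n
  · set m := n - k with hm
    have hnm : k + m = n := Nat.add_sub_cancel' hk
    have ht0 : 0 < t := hh.trans hht
    have h1t : 0 < 1 - t := by linarith
    have ha0 : 0 < a := by rw [ha]; positivity
    have hb0 : 0 < b := by rw [hb]; positivity
    have hab0 : 0 < a + b := by linarith
    have hI := realBeta_eq_Gamma a b ha0 hb0
    have hJ := realBeta_eq_Gamma (a + k) (b + m) (by positivity) (by positivity)
    have key : Set.EqOn
        (fun p : ℝ => (n.choose k : ℝ) * p ^ k * (1 - p) ^ m *
          (p ^ (a - 1) * (1 - p) ^ (b - 1)) /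
          (∫ x in (0:ℝ)..1, x ^ (a - 1) * (1 - x) ^ (b - 1)))
        (fun p : ℝ => ((n.choose k : ℝ) /
            (∫ x in (0:ℝ)..1, x ^ (a - 1) * (1 - x) ^ (b - 1))) *
          (p ^ (a + k - 1) * (1 - p) ^ (b + m - 1)))
        (Set.uIcc 0 1) := by
      intro p hp
      rw [Set.uIcc_of_le (by norm_num : (0:ℝ) ≤ 1)] at hp
      obtain ⟨h0, h1⟩ := hp
      beta_reduce
      rw [← rpow_mix p h0 a ha0 k, ← rpow_mix (1-p) (by linarith) b hb0 m]
      ring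
    rw [intervalIntegral.integral_congr key, intervalIntegral.integral_const_mul, hJ]
    have habn : (a + k) + (b + m) = (a + b) + n := by
      have : ((k:ℝ) + (m:ℝ)) = (n:ℝ) := by exact_mod_cast congrArg (Nat.cast : ℕ → ℝ) hnm
      linarith
    rw [habn, Gamma_add_nat a ha0 k, Gamma_add_nat b hb0 m, Gamma_add_nat (a+b) hab0 n, hI]
    have hP : ∏ i ∈ Finset.range k, (a + i) =
        (∏ i ∈ Finset.range k, (t + i * h)) / h ^ k := by
      rw [show (∏ i ∈ Finset.range k, (a + (i:ℝ))) =
          ∏ i ∈ Finset.range k, ((t + i * h) / h) from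
        Finset.prod_congr rfl fun i _ => by rw [ha]; field_simp]
      rw [Finset.prod_div_distrib, Finset.prod_const, Finset.card_range]
    have hQ : ∏ i ∈ Finset.range m, (b + i) =
        (∏ i ∈ Finset.range m, (1 - t + i * h)) / h ^ m := by
      rw [show (∏ i ∈ Finset.range m, (b + (i:ℝ))) =
          ∏ i ∈ Finset.range m, ((1 - t + i * h) / h) from
        Finset.prod_congr rfl fun i _ => by rw [hb]; field_simp]
      rw [Finset.prod_div_distrib, Finset.prod_const, Finset.card_range]
    have hR : ∏ i ∈ Finset.range n, (a + b + i) =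
        (∏ i ∈ Finset.range n, (1 + i * h)) / h ^ n := by
      rw [show (∏ i ∈ Finset.range n, (a + b + (i:ℝ))) =
          ∏ i ∈ Finset.range n, ((1 + i * h) / h) from
        Finset.prod_congr rfl fun i _ => by rw [ha, hb]; field_simp; ring]
      rw [Finset.prod_div_distrib, Finset.prod_const, Finset.card_range]
    rw [hP, hQ, hR, hBernstein]
    have hGa := (Real.Gamma_pos_of_pos ha0).ne'
    have hGb := (Real.Gamma_pos_of_pos hb0).ne'
    have hGab := (Real.Gamma_pos_of_pos hab0).ne'
    rw [← hnm, pow_add]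
    simp only [Nat.add_sub_cancel_left]
    have hRpos : (0:ℝ) < ∏ i ∈ Finset.range (k + m), (1 + i * h) :=
      Finset.prod_pos fun i _ => by positivity
    field_simp
    ring
    congr 1
    exact Finset.prod_congr rfl fun i _ => by ring
  · simp [hBernstein, Nat.choose_eq_zero_of_lt (Nat.lt_of_not_le hk)]
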